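/- If a k-fault-tolerant gossip graph on n vertices exists with τ(n−1,k) + 2(k+1) edges whenever one on n−1 vertices exists with τ(n−1,k) edges, i.e., τ(n,k) ≤ τ(n−1,k) + 2(k+1) for all n ≥ 2 and k ≥ 0. -/

import Mathlib

/-- A labeled (multi)graph: `m` edges indexed by `Fin m`, each edge being an
unordered pair of vertices (a call), labeled by the time at which the call occurs. -/
structure LabeledGraph (V : Type) where
  m : ℕ
  ends : Fin m → Sym2 V
  label : Fin m → ℕ

namespace LabeledGraph

variable {V : Type}

lemma pos_right_of_fin {a b : ℕ} (e : Fin (a * b)) : 0 < b := by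
  rcases Nat.eq_zero_or_pos b with h | h
  · exact absurd e.isLt (by simp [h])
  · exact h

/-- The maximal label occurring in `G`. -/
def maxLabel (G : LabeledGraph V) : ℕ :=
  Finset.univ.sup fun e => G.label e

/-- `G.IsWalk u v es` : the list of edges `es` forms a walk from `u` to `v`. -/
inductive IsWalk (G : LabeledGraph V) : V → V → List (Fin G.m) → Prop
  | nil (v : V) : IsWalk G v v []
  | cons {u w v : V} {e : Fin G.m} {es : List (Fin G.m)} :
      G.ends e = s(u, w) → IsWalk G w v es → IsWalk G u v (e :: es)

/-- An ascending path from `u` to `v`: a walk whose labels strictly increase. -/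
def IsAscPath (G : LabeledGraph V) (u v : V) (es : List (Fin G.m)) : Prop :=
  G.IsWalk u v es ∧ List.Chain' (· < ·) (es.map G.label)

/-- Number of descents (non-increases) in a list of labels. -/
def descents : List ℕ → ℕ
  | a :: b :: rest => (if b ≤ a then 1 else 0) + descents (b :: rest)
  | _ => 0

/-- An `s`-folded ascending path from `u` to `v`: a walk using `s`-many “folds”,
i.e. a concatenation of `s+1` maximal ascending subpaths. -/
def IsFoldedPath (G : LabeledGraph V) (u v : V) (es : List (Fin G.m)) (s : ℕ) : Prop :=
  G.IsWalk u v es ∧ es.Nodup ∧ descents (es.map G.label) = s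

/-- `G` is a `k`-fault-tolerant gossip graph: after deleting any `≤ k` edges, every
ordered pair of vertices is still joined by an ascending path. -/
def IsFaultTolerant (G : LabeledGraph V) (k : ℕ) : Prop :=
  ∀ F : Finset (Fin G.m), F.card ≤ k →
    ∀ u v : V, ∃ es : List (Fin G.m), G.IsAscPath u v es ∧ ∀ e ∈ es, e ∉ F

/-- Edge sum of two labeled graphs: labels of `G₂` are shifted above those of `G₁`. -/
def edgeSum (G₁ G₂ : LabeledGraph V) : LabeledGraph V where
  m := G₁.m + G₂.m
  ends := fun e =>
    if hlt : e.val < G₁.m then G₁.ends ⟨e.val, hlt⟩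
    else G₂.ends ⟨e.val - G₁.m, by have := e.isLt; omega⟩
  label := fun e =>
    if hlt : e.val < G₁.m then G₁.label ⟨e.val, hlt⟩
    else G₂.label ⟨e.val - G₁.m, by have := e.isLt; omega⟩ + G₁.maxLabel

/-- Edge sum `hG` of `h` identical copies of `G`; the `i`-th copy has labels shifted
up by `i · maxLabel G`. -/
def hCopy (G : LabeledGraph V) (h : ℕ) : LabeledGraph V where
  m := h * G.m
  ends := fun e => G.ends ⟨e.val % G.m, Nat.mod_lt _ (pos_right_of_fin e)⟩
  label := fun e =>
    G.label ⟨e.val % G.m, Nat.mod_lt _ (pos_right_of_fin e)⟩ + (e.val / G.m) * G.maxLabel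

/-- The copy of an edge `e` of `G` in the `i`-th copy inside `hG`. -/
def copyEdge (G : LabeledGraph V) {h : ℕ} (i : Fin h) (e : Fin G.m) : Fin (G.hCopy h).m :=
  ⟨i.val * G.m + e.val, by
    show i.val * G.m + e.val < h * G.m
    calc i.val * G.m + e.val < (i.val + 1) * G.m := by rw [Nat.succ_mul]; omega
    _ ≤ h * G.m := Nat.mul_le_mul_right _ i.isLt⟩

/-- `τ(n,k)`: the minimum number of edges (calls) of a `k`-fault-tolerant gossip
graph (scheme) on `n` nodes. -/
noncomputable def tau (n k : ℕ) : ℕ :=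
  sInf {c | ∃ G : LabeledGraph (Fin n), G.m = c ∧ G.IsFaultTolerant k}

/-- The Knödel graph `W_{Δ,n}` on `n = 2h` vertices: for each `j < h` and each
`l ∈ {1,…,Δ}` an edge labeled `l` between `(1,j)` and `(2, (j + 2^{l-1} - 1) mod h)`
(here `Fin 2` value `0` plays the role of `1`, and `1` the role of `2`). -/
def knodel (Δ h : ℕ) : LabeledGraph (Fin 2 × Fin h) where
  m := Δ * h
  ends := fun e =>
    have hh : 0 < h := pos_right_of_fin e
    s( ((0 : Fin 2), ⟨e.val % h, Nat.mod_lt _ hh⟩),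
       ((1 : Fin 2), ⟨(e.val % h + (2 ^ (e.val / h) - 1)) % h, Nat.mod_lt _ hh⟩) )
  label := fun e => e.val / h + 1

/-- The interval `R((α,β);(γ,δ))` in the Knödel graph on `2h` vertices (it does not
depend on `γ`); vertex class `0` plays the role of `1`, class `1` the role of `2`. -/
def knodelInterval (h : ℕ) (α : Fin 2) (β δ : ℕ) : ℕ :=
  if α = 0 then (if β ≤ δ then δ - β else h - (β - δ))
  else (if δ ≤ β then β - δ else h - (δ - β))

/-- The labeled wheel graph on `n = 2k+1` vertices: center `none` (vertex `u`),
rim vertices `some (i, 0) = vᵢ` and `some (i, 1) = vᵢ'`; edges `(vᵢ,vᵢ')` labeled 1,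
`(vᵢ',u)` labeled 2, `(vᵢ,u)` labeled 3, `(vᵢ', v_{i+1})` labeled 4. -/
def wheel (k : ℕ) : LabeledGraph (Option (Fin k × Fin 2)) where
  m := 4 * k
  ends := fun e =>
    have hk : 0 < k := pos_right_of_fin e
    let i : Fin k := ⟨e.val % k, Nat.mod_lt _ hk⟩
    if e.val / k = 0 then s(some (i, 0), some (i, 1))
    else if e.val / k = 1 then s(some (i, 1), none)
    else if e.val / k = 2 then s(some (i, 0), none)
    else s(some (i, 1), some (⟨(i.val + 1) % k, Nat.mod_lt _ hk⟩, 0))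
  label := fun e => e.val / k + 1

/-- A labeled graph is a valid (timed) schedule when simultaneous calls form a
matching: no two distinct edges with the same label share a vertex. -/
def IsMatchingSchedule (G : LabeledGraph V) : Prop :=
  ∀ e e' : Fin G.m, e ≠ e' → G.label e = G.label e' →
    ∀ v : V, ¬(v ∈ G.ends e ∧ v ∈ G.ends e')

/-- `T(n,k)`: the minimum completion time of a `k`-fault-tolerant gossip scheme on
`n` nodes in which non-overlapping pairs may call simultaneously. -/
noncomputable def minTime (n k : ℕ) : ℕ :=
  sInf {t | ∃ G : LabeledGraph (Fin n),
    G.IsMatchingSchedule ∧ G.IsFaultTolerant k ∧ G.maxLabel ≤ t}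

end LabeledGraph

namespace LabeledGraph

variable {V : Type} {p : ℕ}

lemma isWalk_append {G : LabeledGraph V} {u w v : V} {l1 l2 : List (Fin G.m)}
    (h1 : G.IsWalk u w l1) (h2 : G.IsWalk w v l2) : G.IsWalk u v (l1 ++ l2) := by
  induction h1 with
  | nil => simpa
  | cons he _ ih => exact .cons he (ih h2)

/-- Extension: add a new vertex `last p` with `k+1` calls to `w` before all and
`k+1` calls after all. -/
def ext (G : LabeledGraph (Fin p)) (k : ℕ) (w : Fin p) : LabeledGraph (Fin (p+1)) where
  m := G.m + 2 * (k + 1)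
  ends := fun e =>
    if h0 : e.val < k + 1 then s(Fin.last p, Fin.castSucc w)
    else if h : e.val < k + 1 + G.m then
      Sym2.map Fin.castSucc (G.ends ⟨e.val - (k + 1), by omega⟩)
    else s(Fin.last p, Fin.castSucc w)
  label := fun e =>
    if h0 : e.val < k + 1 then 0
    else if h : e.val < k + 1 + G.m then G.label ⟨e.val - (k + 1), by omega⟩ + 1
    else G.maxLabel + 2

variable {G : LabeledGraph (Fin p)} {k : ℕ} {w : Fin p}

lemma ext_m : (ext G k w).m = G.m + 2 * (k + 1) := rfl

def liftEdge (G : LabeledGraph (Fin p)) (k : ℕ) (w : Fin p) (e : Fin G.m) :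
    Fin (ext G k w).m := ⟨k + 1 + e.val, by have := e.isLt; simp only [ext_m]; omega⟩

lemma liftEdge_inj : Function.Injective (liftEdge G k w) := by
  intro a b h
  have : (liftEdge G k w a).val = (liftEdge G k w b).val := by rw [h]
  simp only [liftEdge] at this
  exact Fin.ext (by omega)

lemma ends_liftEdge (e : Fin G.m) :
    (ext G k w).ends (liftEdge G k w e) = Sym2.map Fin.castSucc (G.ends e) := by
  have he := e.isLt
  simp only [ext, liftEdge]
  rw [dif_neg (by omega), dif_pos (by omega)]
  simp only [Nat.add_sub_cancel_left, Fin.eta]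

lemma label_liftEdge (e : Fin G.m) :
    (ext G k w).label (liftEdge G k w e) = G.label e + 1 := by
  have he := e.isLt
  simp only [ext, liftEdge]
  rw [dif_neg (by omega), dif_pos (by omega)]
  simp only [Nat.add_sub_cancel_left, Fin.eta]

def beforeEdge (G : LabeledGraph (Fin p)) (k : ℕ) (w : Fin p) (i : Fin (k+1)) :
    Fin (ext G k w).m := ⟨i.val, by have := i.isLt; simp only [ext_m]; omega⟩

def afterEdge (G : LabeledGraph (Fin p)) (k : ℕ) (w : Fin p) (i : Fin (k+1)) :
    Fin (ext G k w).m := ⟨k + 1 + G.m + i.val, by have := i.isLt; simp only [ext_m]; omega⟩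

lemma ends_beforeEdge (i : Fin (k+1)) :
    (ext G k w).ends (beforeEdge G k w i) = s(Fin.last p, Fin.castSucc w) := by
  have := i.isLt
  simp only [ext, beforeEdge]
  rw [dif_pos (by omega)]

lemma label_beforeEdge (i : Fin (k+1)) : (ext G k w).label (beforeEdge G k w i) = 0 := by
  have := i.isLt
  simp only [ext, beforeEdge]
  rw [dif_pos (by omega)]

lemma ends_afterEdge (i : Fin (k+1)) :
    (ext G k w).ends (afterEdge G k w i) = s(Fin.last p, Fin.castSucc w) := by
  simp only [ext, afterEdge]
  rw [dif_neg (by omega), dif_neg (by omega)]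

lemma label_afterEdge (i : Fin (k+1)) :
    (ext G k w).label (afterEdge G k w i) = G.maxLabel + 2 := by
  simp only [ext, afterEdge]
  rw [dif_neg (by omega), dif_neg (by omega)]

lemma lift_walk {u v : Fin p} {es : List (Fin G.m)} (h : G.IsWalk u v es) :
    (ext G k w).IsWalk (Fin.castSucc u) (Fin.castSucc v) (es.map (liftEdge G k w)) := by
  induction h with
  | nil v => exact .nil _
  | cons he _ ih =>
      exact .cons (by rw [ends_liftEdge, he, Sym2.map_pair_eq]) ih

lemma lift_labels {es : List (Fin G.m)} :
    (es.map (liftEdge G k w)).map (ext G k w).label = es.map (fun e => G.label e + 1) := by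
  rw [List.map_map]
  exact List.map_congr_left fun e _ => label_liftEdge e

lemma exists_avoid {M : ℕ} (F : Finset (Fin M)) (hF : F.card ≤ k)
    (f : Fin (k+1) → Fin M) (hf : Function.Injective f) : ∃ i, f i ∉ F := by
  by_contra h
  push_neg at h
  have hsub : Finset.univ.image f ⊆ F := by
    intro x hx
    obtain ⟨i, _, rfl⟩ := Finset.mem_image.1 hx
    exact h i
  have := Finset.card_le_card hsub
  rw [Finset.card_image_of_injective _ hf, Finset.card_univ, Fintype.card_fin] at this
  omega

lemma ext_faultTolerant (hG : G.IsFaultTolerant k) : (ext G k w).IsFaultTolerant k := by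
  intro F hF u v
  -- a good before edge and a good after edge
  obtain ⟨ib, hib⟩ := exists_avoid F hF (beforeEdge G k w) (by
    intro a b h
    have : (beforeEdge G k w a).val = (beforeEdge G k w b).val := by rw [h]
    simpa [beforeEdge, Fin.ext_iff] using this)
  obtain ⟨ia, hia⟩ := exists_avoid F hF (afterEdge G k w) (by
    intro a b h
    have : (afterEdge G k w a).val = (afterEdge G k w b).val := by rw [h]
    simp only [afterEdge] at this
    exact Fin.ext (by omega))
  -- the set of faulty old edges
  set F' : Finset (Fin G.m) := Finset.univ.filter (fun e => liftEdge G k w e ∈ F) with hF'def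
  have hF' : F'.card ≤ k := by
    have h1 : F'.image (liftEdge G k w) ⊆ F := by
      intro x hx
      obtain ⟨e, he, rfl⟩ := Finset.mem_image.1 hx
      exact (Finset.mem_filter.1 he).2
    calc F'.card = (F'.image (liftEdge G k w)).card :=
          (Finset.card_image_of_injective _ liftEdge_inj).symm
      _ ≤ F.card := Finset.card_le_card h1
      _ ≤ k := hF
  have hmemF' : ∀ e : Fin G.m, liftEdge G k w e ∈ F → e ∈ F' := fun e h => by
    rw [hF'def]; exact Finset.mem_filter.2 ⟨Finset.mem_univ _, h⟩
  have hlab_le : ∀ (x : ℕ) (es : List (Fin G.m)),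
      x ∈ es.map (fun e => G.label e + 1) → x < G.maxLabel + 2 := by
    intro x es hx
    obtain ⟨e, _, rfl⟩ := List.mem_map.1 hx
    have : G.label e ≤ G.maxLabel := Finset.le_sup (Finset.mem_univ e)
    omega
  rcases Fin.eq_castSucc_or_eq_last u with ⟨a, rfl⟩ | rfl
  · rcases Fin.eq_castSucc_or_eq_last v with ⟨b, rfl⟩ | rfl
    · -- both old
      obtain ⟨es, ⟨hwalk, hchain⟩, hes⟩ := hG F' hF' a b
      refine ⟨es.map (liftEdge G k w), ⟨lift_walk hwalk, ?_⟩, ?_⟩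
      · rw [lift_labels]
        simp only [List.Chain', List.isChain_map] at hchain ⊢
        exact hchain.imp (fun h => by omega)
      · intro e he
        obtain ⟨e', he', rfl⟩ := List.mem_map.1 he
        intro hmem
        exact (hes e' he') (hmemF' e' hmem)
    · -- old to new : path to w then an after edge
      obtain ⟨es, ⟨hwalk, hchain⟩, hes⟩ := hG F' hF' a w
      refine ⟨es.map (liftEdge G k w) ++ [afterEdge G k w ia], ⟨?_, ?_⟩, ?_⟩
      · refine isWalk_append (lift_walk hwalk) ?_
        exact .cons (by rw [ends_afterEdge, Sym2.eq_swap]) (.nil _)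
      · rw [List.map_append, lift_labels]
        refine List.isChain_append.2 ⟨?_, ?_, ?_⟩
        · simp only [List.Chain', List.isChain_map] at hchain ⊢
          exact hchain.imp (fun h => by omega)
        · simp [label_afterEdge]
        · intro x hx y hy
          have hx' := List.mem_of_mem_getLast? hx
          simp only [List.map_cons, List.map_nil, label_afterEdge,
            List.head?_cons, Option.mem_def, Option.some.injEq] at hy
          rw [← hy]
          exact hlab_le x es hx'
      · intro e he
        rcases List.mem_append.1 he with h | h
        · obtain ⟨e', he', rfl⟩ := List.mem_map.1 h
          intro hmem
          exact (hes e' he') (hmemF' e' hmem)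
        · simp only [List.mem_singleton] at h
          exact h ▸ hia
  · rcases Fin.eq_castSucc_or_eq_last v with ⟨b, rfl⟩ | rfl
    · -- new to old : before edge then path from w
      obtain ⟨es, ⟨hwalk, hchain⟩, hes⟩ := hG F' hF' w b
      refine ⟨beforeEdge G k w ib :: es.map (liftEdge G k w), ⟨?_, ?_⟩, ?_⟩
      · exact .cons (ends_beforeEdge ib) (lift_walk hwalk)
      · rw [List.map_cons, lift_labels, label_beforeEdge]
        refine List.isChain_cons.2 ⟨?_, ?_⟩
        · intro y hy
          have := List.mem_of_mem_head? hy
          obtain ⟨e, _, rfl⟩ := List.mem_map.1 this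
          omega
        · simp only [List.Chain', List.isChain_map] at hchain ⊢
          exact hchain.imp (fun h => by omega)
      · intro e he
        rcases List.mem_cons.1 he with rfl | h
        · exact hib
        · obtain ⟨e', he', rfl⟩ := List.mem_map.1 h
          intro hmem
          exact (hes e' he') (hmemF' e' hmem)
    · exact ⟨[], ⟨.nil _, List.isChain_nil⟩, by simp⟩

/-- The trivial graph on one vertex with no edges. -/
def trivialGraph : LabeledGraph (Fin 1) where
  m := 0
  ends := Fin.elim0
  label := Fin.elim0

lemma trivialGraph_faultTolerant (k : ℕ) : trivialGraph.IsFaultTolerant k := by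
  intro F _ u v
  have : u = v := Subsingleton.elim u v
  exact ⟨[], ⟨this ▸ .nil u, List.isChain_nil⟩, by simp⟩

lemma tau_set_nonempty (k : ℕ) : ∀ p, 0 < p →
    ∃ c, c ∈ {c | ∃ G : LabeledGraph (Fin p), G.m = c ∧ G.IsFaultTolerant k} := by
  intro p hp
  induction p with
  | zero => omega
  | succ q ih =>
    rcases Nat.eq_zero_or_pos q with rfl | hq
    · exact ⟨0, trivialGraph, rfl, trivialGraph_faultTolerant k⟩
    · obtain ⟨c, G, _, hG⟩ := ih hq
      exact ⟨_, ext G k ⟨0, hq⟩, rfl, ext_faultTolerant hG⟩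

end LabeledGraph

open LabeledGraph in
/-- `τ(n,k) ≤ τ(n−1,k) + 2(k+1)` for all `n ≥ 2` and `k ≥ 0`. -/
theorem tau_succ_le (n k : ℕ) (hn : 2 ≤ n) :
    tau n k ≤ tau (n - 1) k + 2 * (k + 1) := by
  obtain ⟨p, rfl⟩ : ∃ p, n = p + 1 := ⟨n - 1, by omega⟩
  have hp : 0 < p := by omega
  simp only [Nat.add_sub_cancel]
  have hne := tau_set_nonempty k p hp
  have hmem : tau p k ∈ {c | ∃ G : LabeledGraph (Fin p), G.m = c ∧ G.IsFaultTolerant k} :=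
    Nat.sInf_mem hne
  obtain ⟨G, hGm, hG⟩ := hmem
  exact Nat.sInf_le ⟨ext G k ⟨0, hp⟩, by rw [ext_m, hGm], ext_faultTolerant hG⟩
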